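/- Let l be (M,m)-(restricted smooth, restricted strongly concave) on the sparse subdomain Ω_{2k}, with 0 < m ≤ M. Let S ⊆ [n] with |S| < k (with the relevant maximizers assumed to exist), let Y ⊆ [n] be a finite nonempty set, and let t ≥ 0. Then the average marginal gain over Y satisfies (1/|Y|)·Σ_{a∈Y} f_S(a) ≥ (t/(2M·|Y|))·|{s ∈ Y : (∂_s l(β^(S)))² ≥ t}|; in particular, if a is drawn uniformly at random from Y, then E[f_S(a)] ≥ (t/(2M))·Pr[(∂_a l(β^(S)))² ≥ t]. -/

import Mathlib

open scoped BigOperators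

noncomputable section

abbrev Euc (n : ℕ) := EuclideanSpace ℝ (Fin n)

/-- Number of nonzero coordinates (the ℓ₀ "norm"). -/
def norm0 {n : ℕ} (x : Euc n) : ℕ := (Finset.univ.filter fun i => x i ≠ 0).card

/-- `l` is (M,m)-(restricted smooth, restricted strongly concave) on the sparse
subdomain `Ω_r`, with gradient `g`. -/
def IsRSCSM {n : ℕ} (l : Euc n → ℝ) (g : Euc n → Euc n) (M m : ℝ) (r : ℕ) : Prop :=
  ∀ x y : Euc n, norm0 x ≤ r → norm0 y ≤ r → norm0 (x - y) ≤ r →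
    (l y - l x - (inner ℝ (g x) (y - x) : ℝ) ≤ -(m / 2) * ‖y - x‖ ^ 2) ∧
    (-(M / 2) * ‖y - x‖ ^ 2 ≤ l y - l x - (inner ℝ (g x) (y - x) : ℝ))

/-- `x` is supported in the index set `S`. -/
def SuppIn {n : ℕ} (S : Finset (Fin n)) (x : Euc n) : Prop := ∀ i, i ∉ S → x i = 0

/-- The support selection function `f(S) = l(β^(S)) - l(0)`. -/
def fsel {n : ℕ} (l : Euc n → ℝ) (B : Finset (Fin n) → Euc n) (S : Finset (Fin n)) : ℝ :=
  l (B S) - l 0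



lemma norm0_le_of_suppIn {n : ℕ} {S : Finset (Fin n)} {x : Euc n} (h : SuppIn S x) :
    norm0 x ≤ S.card := by
  apply Finset.card_le_card
  intro i hi
  simp only [Finset.mem_filter] at hi
  by_contra hc
  exact hi.2 (h i hc)

theorem stmt13 {n k : ℕ} (l : Euc n → ℝ) (g : Euc n → Euc n) (M m : ℝ)
    (hm : 0 < m) (hmM : m ≤ M)
    (hgrad : ∀ x, HasGradientAt l (g x) x)
    (hl : IsRSCSM l g M m (2 * k))
    (B : Finset (Fin n) → Euc n)
    (hB0 : B ∅ = 0)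
    (hBsupp : ∀ S, SuppIn S (B S))
    (hBmax : ∀ S x, SuppIn S x → l x ≤ l (B S))
    (S : Finset (Fin n)) (hS : S.card < k)
    (Y : Finset (Fin n)) (hY : Y.Nonempty)
    (t : ℝ) (ht : 0 ≤ t) :
    (1 / (Y.card : ℝ)) * ∑ a ∈ Y, (fsel l B (insert a S) - fsel l B S)
      ≥ (t / (2 * M * (Y.card : ℝ))) *
          ((Y.filter fun s => t ≤ (g (B S) s) ^ 2).card : ℝ) := by
  have hM : 0 < M := lt_of_lt_of_le hm hmM
  have hk : 1 ≤ k := Nat.one_le_iff_ne_zero.mpr (by rintro rfl; omega)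
  have hYc : (0:ℝ) < (Y.card : ℝ) := by exact_mod_cast Finset.card_pos.mpr hY
  -- key pointwise bound
  have key : ∀ a : Fin n, (g (B S) a) ^ 2 / (2 * M) ≤
      fsel l B (insert a S) - fsel l B S := by
    intro a
    set c : ℝ := g (B S) a / M with hc
    set y : Euc n := B S + EuclideanSpace.single a c with hy
    have hsuppy : SuppIn (insert a S) y := by
      intro i hi
      have hiS : i ∉ S := fun h => hi (Finset.mem_insert_of_mem h)
      have hia : i ≠ a := fun h => hi (by simp [h])
      simp [hy, PiLp.add_apply, hBsupp S i hiS, EuclideanSpace.single_apply, hia]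
    have h1 : norm0 (B S) ≤ 2 * k := by
      have := norm0_le_of_suppIn (hBsupp S)
      omega
    have h2 : norm0 y ≤ 2 * k := by
      have := norm0_le_of_suppIn hsuppy
      have hcard : (insert a S).card ≤ S.card + 1 := Finset.card_insert_le a S
      omega
    have h3 : norm0 (B S - y) ≤ 2 * k := by
      have : norm0 (B S - y) ≤ ({a} : Finset (Fin n)).card := by
        apply norm0_le_of_suppIn
        intro i hi
        have hia : i ≠ a := by simpa using hi
        simp [hy, PiLp.sub_apply, PiLp.add_apply, EuclideanSpace.single_apply, hia]
      simp at this
      omega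
    have hrs := (hl (B S) y h1 h2 h3).2
    have hyx : y - B S = EuclideanSpace.single a c := by
      simp [hy]
    rw [hyx] at hrs
    have hinner : (inner ℝ (g (B S)) (EuclideanSpace.single a c) : ℝ) = c * g (B S) a := by
      rw [EuclideanSpace.inner_single_right]
      simp
    have hnorm : ‖(EuclideanSpace.single a c : Euc n)‖ ^ 2 = c ^ 2 := by
      rw [EuclideanSpace.norm_single]
      exact sq_abs c
    rw [hinner, hnorm] at hrs
    have hly : l y ≤ l (B (insert a S)) := hBmax _ _ hsuppy
    have hcomp : c * g (B S) a - M / 2 * c ^ 2 = (g (B S) a) ^ 2 / (2 * M) := by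
      rw [hc]
      field_simp
      ring
    have hfs : fsel l B (insert a S) - fsel l B S = l (B (insert a S)) - l (B S) := by
      simp [fsel]
    rw [hfs]
    nlinarith [hrs, hly]
  have hnn : ∀ a ∈ Y, (0:ℝ) ≤ fsel l B (insert a S) - fsel l B S := by
    intro a _
    have h1 := key a
    have h2 : (0:ℝ) ≤ (g (B S) a) ^ 2 / (2 * M) := by positivity
    linarith
  set F := Y.filter fun s => t ≤ (g (B S) s) ^ 2 with hF
  have hsum : (t / (2 * M)) * (F.card : ℝ)
      ≤ ∑ a ∈ Y, (fsel l B (insert a S) - fsel l B S) := by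
    calc (t / (2 * M)) * (F.card : ℝ) = ∑ _a ∈ F, (t / (2 * M)) := by
          rw [Finset.sum_const, nsmul_eq_mul]; ring
      _ ≤ ∑ a ∈ F, (fsel l B (insert a S) - fsel l B S) := by
          apply Finset.sum_le_sum
          intro a ha
          have hmem := Finset.mem_filter.mp ha
          have h1 : t / (2 * M) ≤ (g (B S) a) ^ 2 / (2 * M) := by
            gcongr
            exact hmem.2
          linarith [key a]
      _ ≤ ∑ a ∈ Y, (fsel l B (insert a S) - fsel l B S) :=
          Finset.sum_le_sum_of_subset_of_nonneg (Finset.filter_subset _ _)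
            (fun a ha _ => hnn a ha)
  rw [ge_iff_le]
  have heq : t / (2 * M * (Y.card : ℝ)) * (F.card : ℝ)
      = (1 / (Y.card : ℝ)) * ((t / (2 * M)) * (F.card : ℝ)) := by
    rw [← div_div]
    ring
  rw [heq]
  apply mul_le_mul_of_nonneg_left hsum (by positivity)
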